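/- Let X be an n×n matrix, n ≥ 3, satisfying condition (0). Then either all columns of X are equal (X = X^{(1)} e^t), or there exists α > 0 such that X^{(i)} − X^{(j)} is a permutation of α(e_1 − e_2) for all distinct i, j. -/

import Mathlib

open Matrix

/-- `P` is a permutation matrix. -/
def IsPermMatrix {n : ℕ} (P : Matrix (Fin n) (Fin n) ℝ) : Prop :=
  ∃ σ : Equiv.Perm (Fin n), P = σ.permMatrix ℝ

/-- Vector majorization: `a = D b` for some doubly stochastic `D`. -/
def VecMaj {n : ℕ} (a b : Fin n → ℝ) : Prop :=
  ∃ D ∈ doublyStochastic ℝ (Fin n), a = D.mulVec b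

/-- Strong majorization of matrices: `A = D B` for some doubly stochastic `D`. -/
def StrongMaj {n m : ℕ} (A B : Matrix (Fin n) (Fin m) ℝ) : Prop :=
  ∃ D ∈ doublyStochastic ℝ (Fin n), A = D * B

/-- `a` is a permutation of `b`. -/
def PermOf {n : ℕ} (a b : Fin n → ℝ) : Prop :=
  ∃ σ : Equiv.Perm (Fin n), ∀ i, a i = b (σ i)

def Cond0 {n : ℕ} (X : Matrix (Fin n) (Fin n) ℝ) : Prop :=
  ∀ a : Fin n → ℝ, ∑ i, a i = 0 →
    ∀ P : Matrix (Fin n) (Fin n) ℝ, IsPermMatrix P →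
      PermOf (X.mulVec a) (X.mulVec (P.mulVec a))

section Auxiliary

open Finset Equiv

lemma perm_mulVec {n : ℕ} (σ : Equiv.Perm (Fin n)) (a : Fin n → ℝ) :
    (σ.permMatrix ℝ).mulVec a = fun i => a (σ i) := by
  funext i
  simp [Matrix.mulVec, dotProduct, Equiv.Perm.permMatrix, PEquiv.toMatrix,
    Equiv.toPEquiv, Option.mem_def, ite_mul, Finset.sum_ite_eq]

/-- A submodule covered by finitely many submodules is contained in one of them. -/
lemma cov_lemma {V : Type*} [AddCommGroup V] [Module ℝ V] {ι : Type*} [DecidableEq ι]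
    (s : Finset ι) (p : ι → Submodule ℝ V) (H : Submodule ℝ V)
    (hcov : ∀ a ∈ H, ∃ i ∈ s, a ∈ p i) : ∃ i ∈ s, ∀ a ∈ H, a ∈ p i := by
  induction s using Finset.induction_on with
  | empty =>
    obtain ⟨i, hi, -⟩ := hcov 0 H.zero_mem
    exact absurd hi (Finset.notMem_empty i)
  | @insert i₀ s hi₀ IH =>
    by_cases h1 : ∀ a ∈ H, a ∈ p i₀
    · exact ⟨i₀, Finset.mem_insert_self _ _, h1⟩
    push_neg at h1
    obtain ⟨u, hu, hu'⟩ := h1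
    by_cases h2 : ∀ a ∈ H, ∃ i ∈ s, a ∈ p i
    · obtain ⟨i, hi, hle⟩ := IH h2
      exact ⟨i, Finset.mem_insert_of_mem hi, hle⟩
    push_neg at h2
    obtain ⟨v, hv, hv'⟩ := h2
    have hvp : v ∈ p i₀ := by
      obtain ⟨i, hi, hvi⟩ := hcov v hv
      rcases Finset.mem_insert.mp hi with rfl | hi
      · exact hvi
      · exact absurd hvi (hv' i hi)
    have hw : ∀ t : ℕ, ∃ i ∈ s, u + (t : ℝ) • v ∈ p i := by
      intro t
      obtain ⟨i, hi, hwi⟩ := hcov (u + (t : ℝ) • v) (H.add_mem hu (H.smul_mem _ hv))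
      rcases Finset.mem_insert.mp hi with rfl | hi
      · exfalso
        have : u ∈ p i := by
          have := (p i).sub_mem hwi ((p i).smul_mem (t : ℝ) hvp)
          simpa using this
        exact hu' this
      · exact ⟨i, hi, hwi⟩
    classical
    set φ : ℕ → ι := fun t => (hw t).choose with hφ
    have hφs : ∀ t ∈ Finset.range (s.card + 1), φ t ∈ s := fun t _ => (hw t).choose_spec.1
    have hφp : ∀ t : ℕ, u + (t : ℝ) • v ∈ p (φ t) := fun t => (hw t).choose_spec.2
    obtain ⟨t, -, t', -, htt, heq⟩ :=
      Finset.exists_ne_map_eq_of_card_lt_of_maps_to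
        (by simp [Finset.card_range]) hφs
    exfalso
    apply hv' (φ t) ((hw t).choose_spec.1)
    have hsub : ((t : ℝ) - (t' : ℝ)) • v ∈ p (φ t) := by
      have h2 : u + (t' : ℝ) • v ∈ p (φ t) := heq ▸ hφp t'
      have := (p (φ t)).sub_mem (hφp t) h2
      simpa [sub_smul] using this
    have hne : (t : ℝ) - (t' : ℝ) ≠ 0 := sub_ne_zero.mpr (by exact_mod_cast htt)
    have := (p (φ t)).smul_mem ((t : ℝ) - (t' : ℝ))⁻¹ hsub
    simpa [smul_smul, inv_mul_cancel₀ hne] using this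

/-- If a function's differences are reproduced by a row `Z` through two permutations,
then the two permuted versions of `y` agree. -/
lemma diff_const {n : ℕ} (hn : 0 < n) (y Z : Fin n → ℝ) (s s' : Equiv.Perm (Fin n))
    (h : ∀ i j, y i - y j = Z (s i) - Z (s j))
    (h' : ∀ i j, y i - y j = Z (s' i) - Z (s' j)) :
    ∀ u, y (s.symm u) = y (s'.symm u) := by
  set D : Fin n → ℝ := fun u => y (s.symm u) - y (s'.symm u) with hD
  have key : ∀ u v, D u = D v := by
    intro u v
    have h1 := h (s.symm u) (s.symm v)
    have h2 := h' (s'.symm u) (s'.symm v)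
    simp only [Equiv.apply_symm_apply] at h1 h2
    simp only [hD]
    linarith
  have hsum : ∑ u, D u = 0 := by
    simp only [hD]
    rw [Finset.sum_sub_distrib, Equiv.sum_comp s.symm y, Equiv.sum_comp s'.symm y, sub_self]
  intro u
  have hnu : (n : ℝ) * D u = 0 := by
    calc (n : ℝ) * D u = ∑ _v : Fin n, D u := by
          rw [Finset.sum_const, Finset.card_univ, Fintype.card_fin, nsmul_eq_mul]
      _ = ∑ v, D v := Finset.sum_congr rfl fun v _ => key u v
      _ = 0 := hsum
  have hn' : (n : ℝ) ≠ 0 := Nat.cast_ne_zero.mpr hn.ne'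
  rcases mul_eq_zero.mp hnu with h0 | h0
  · exact absurd h0 hn'
  · have : D u = 0 := h0
    simpa [hD, sub_eq_zero] using this

lemma swap_pair_eq {n : ℕ} (y : Fin n → ℝ) (q1 q2 q1' q2' : Fin n)
    (hq : y q1 ≠ y q2) (hq' : y q1' ≠ y q2')
    (heq : ∀ u, y (Equiv.swap q1 q2 u) = y (Equiv.swap q1' q2' u)) :
    (q1 = q1' ∧ q2 = q2') ∨ (q1 = q2' ∧ q2 = q1') := by
  have h12 : q1 ≠ q2 := fun h => hq (by rw [h])
  have h12' : q1' ≠ q2' := fun h => hq' (by rw [h])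
  have hm1 : q1 = q1' ∨ q1 = q2' := by
    by_contra hc
    push_neg at hc
    have := heq q1
    rw [Equiv.swap_apply_left, Equiv.swap_apply_of_ne_of_ne hc.1 hc.2] at this
    exact hq this.symm
  have hm2 : q2 = q1' ∨ q2 = q2' := by
    by_contra hc
    push_neg at hc
    have := heq q2
    rw [Equiv.swap_apply_right, Equiv.swap_apply_of_ne_of_ne hc.1 hc.2] at this
    exact hq this
  rcases hm1 with rfl | rfl
  · rcases hm2 with rfl | h
    · exact absurd rfl h12
    · exact Or.inl ⟨rfl, h⟩
  · rcases hm2 with h | rfl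
    · exact Or.inr ⟨rfl, h⟩
    · exact absurd rfl h12

lemma permOf_two_spike {n : ℕ} (α : ℝ) (u₀ u₁ t₀ t₁ : Fin n) (hu : u₀ ≠ u₁) (ht : t₀ ≠ t₁)
    (v w : Fin n → ℝ)
    (hv : ∀ r, v r = if r = u₀ then α else if r = u₁ then -α else 0)
    (hw : ∀ t, w t = if t = t₀ then α else if t = t₁ then -α else 0) :
    PermOf v w := by
  classical
  set τ₁ : Equiv.Perm (Fin n) := Equiv.swap u₀ t₀ with hτ₁
  set τ₂ : Equiv.Perm (Fin n) := Equiv.swap (τ₁ u₁) t₁ with hτ₂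
  set σ : Equiv.Perm (Fin n) := τ₁.trans τ₂ with hσ
  have hb : τ₁ u₁ ≠ t₀ := by
    intro h
    have : τ₁ u₁ = τ₁ u₀ := by rw [h, hτ₁, Equiv.swap_apply_left]
    exact hu (τ₁.injective this).symm
  have hσ0 : σ u₀ = t₀ := by
    simp only [hσ, Equiv.trans_apply, hτ₁, Equiv.swap_apply_left]
    rw [hτ₂, Equiv.swap_apply_of_ne_of_ne (Ne.symm hb) ht]
  have hσ1 : σ u₁ = t₁ := by
    simp only [hσ, Equiv.trans_apply]
    rw [hτ₂, Equiv.swap_apply_left]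
  refine ⟨σ, fun r => ?_⟩
  rw [hv, hw]
  by_cases h0 : r = u₀
  · subst h0
    rw [hσ0]
    simp
  by_cases h1 : r = u₁
  · subst h1
    rw [hσ1]
    simp [Ne.symm hu, Ne.symm ht]
  have hs0 : σ r ≠ t₀ := fun h => h0 (σ.injective (h.trans hσ0.symm))
  have hs1 : σ r ≠ t₁ := fun h => h1 (σ.injective (h.trans hσ1.symm))
  simp [h0, h1, hs0, hs1]

lemma master_fact {n : ℕ} (X : Matrix (Fin n) (Fin n) ℝ) (hX : Cond0 X)
    (π : Equiv.Perm (Fin n)) :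
    ∃ ρ : Fin n → Fin n, ∀ r i j, X r i - X r j = X (ρ r) (π i) - X (ρ r) (π j) := by
  classical
  set σ : Equiv.Perm (Fin n) := π⁻¹ with hσdef
  set H : Submodule ℝ (Fin n → ℝ) :=
    { carrier := {a | ∑ i, a i = 0}
      add_mem' := by
        intro a b ha hb
        simp only [Set.mem_setOf_eq, Pi.add_apply, Finset.sum_add_distrib] at *
        rw [ha, hb, add_zero]
      zero_mem' := by simp
      smul_mem' := by
        intro c a ha
        simp only [Set.mem_setOf_eq, Pi.smul_apply, smul_eq_mul, ← Finset.mul_sum] at *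
        rw [ha, mul_zero] } with hHdef
  set W : Equiv.Perm (Fin n) → Submodule ℝ (Fin n → ℝ) := fun τ =>
    { carrier := {a | ∀ r, ∑ m, X r m * a m = ∑ m, X (τ r) m * a (σ m)}
      add_mem' := by
        intro a b ha hb r
        simp only [Set.mem_setOf_eq, Pi.add_apply, mul_add, Finset.sum_add_distrib] at *
        rw [ha r, hb r]
      zero_mem' := by simp
      smul_mem' := by
        intro c a ha r
        simp only [Set.mem_setOf_eq, Pi.smul_apply, smul_eq_mul, mul_left_comm,
          ← Finset.mul_sum] at *
        rw [ha r] } with hWdef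
  have hcov : ∀ a ∈ H, ∃ τ ∈ (Finset.univ : Finset (Equiv.Perm (Fin n))), a ∈ W τ := by
    intro a ha
    obtain ⟨τ, hτ⟩ := hX a ha (σ.permMatrix ℝ) ⟨σ, rfl⟩
    refine ⟨τ, Finset.mem_univ _, fun r => ?_⟩
    have := hτ r
    rw [perm_mulVec] at this
    simpa [Matrix.mulVec, dotProduct] using this
  obtain ⟨τ, -, hτ⟩ := cov_lemma Finset.univ W H hcov
  refine ⟨τ, fun r i j => ?_⟩
  have hmem : (Pi.single i (1:ℝ) - Pi.single j 1) ∈ H := by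
    simp only [hHdef, Submodule.mem_mk, AddSubmonoid.mem_mk, AddSubsemigroup.mem_mk,
      Set.mem_setOf_eq, Pi.sub_apply, Finset.sum_sub_distrib]
    rw [Finset.sum_pi_single', Finset.sum_pi_single']
    simp
  have key := hτ _ hmem r
  simp only [hWdef, Pi.sub_apply] at key
  have hL : ∀ (w : Fin n → ℝ),
      ∑ m, w m * ((Pi.single i 1 : Fin n → ℝ) m - (Pi.single j 1 : Fin n → ℝ) m) = w i - w j := by
    intro w
    simp only [mul_sub, Finset.sum_sub_distrib, Pi.single_apply, mul_ite, mul_one, mul_zero]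
    rw [Finset.sum_ite_eq' Finset.univ i w, Finset.sum_ite_eq' Finset.univ j w]
    simp
  have hR : ∀ (w : Fin n → ℝ),
      ∑ m, w m * ((Pi.single i 1 : Fin n → ℝ) (σ m) - (Pi.single j 1 : Fin n → ℝ) (σ m)) = w (π i) - w (π j) := by
    intro w
    have h1 : ∀ m : Fin n, (Pi.single i 1 : Fin n → ℝ) (σ m) = if m = π i then 1 else 0 := by
      intro m
      rw [Pi.single_apply]
      congr 1
      simp only [eq_iff_iff]
      constructor
      · intro h; rw [← h]; simp [hσdef]
      · intro h; rw [h]; simp [hσdef]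
    have h2 : ∀ m : Fin n, (Pi.single j 1 : Fin n → ℝ) (σ m) = if m = π j then 1 else 0 := by
      intro m
      rw [Pi.single_apply]
      congr 1
      simp only [eq_iff_iff]
      constructor
      · intro h; rw [← h]; simp [hσdef]
      · intro h; rw [h]; simp [hσdef]
    simp only [h1, h2, mul_sub, Finset.sum_sub_distrib, mul_ite, mul_one, mul_zero]
    rw [Finset.sum_ite_eq' Finset.univ (π i) w, Finset.sum_ite_eq' Finset.univ (π j) w]
    simp
  rw [hL (X r), hR (X (τ r))] at key
  exact key

end Auxiliary

theorem stmt15 {n : ℕ} (hn : 3 ≤ n) (X : Matrix (Fin n) (Fin n) ℝ)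
    (hX : Cond0 X) :
    (∀ k l l', X k l = X k l') ∨
    ∃ α : ℝ, 0 < α ∧ ∀ i j : Fin n, i ≠ j →
      PermOf (fun k => X k i - X k j)
        (α • (Pi.single (⟨0, by omega⟩ : Fin n) 1 - Pi.single ⟨1, by omega⟩ 1)) := by
  classical
  have hn0 : 0 < n := by omega
  choose R hR using master_fact X hX
  by_cases hconst : ∀ k l l', X k l = X k l'
  · exact Or.inl hconst
  right
  push_neg at hconst
  obtain ⟨k, l₀, l₀', hkne⟩ := hconst
  -- Step A1: there is a coordinate x₀ such that at most one coordinate differs from it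
  have hnotbad : ∃ x, ∀ u v, X k u ≠ X k x → X k v ≠ X k x → u = v := by
    by_contra hbad
    push_neg at hbad
    set O : Finset (Fin n × Fin n) :=
      Finset.univ.filter (fun q => X k q.1 ≠ X k q.2) with hO
    have hOmem : ∀ q : Fin n × Fin n, q ∈ O ↔ X k q.1 ≠ X k q.2 := by
      intro q; simp [hO]
    -- lower bound
    have hlow : 2 * n ≤ O.card := by
      have hfib := Finset.card_eq_sum_card_fiberwise
        (f := fun q : Fin n × Fin n => q.1) (s := O) (t := Finset.univ)
        (fun q _ => Finset.mem_univ q.1)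
      rw [hfib]
      have : ∀ x : Fin n, 2 ≤ (O.filter (fun q => q.1 = x)).card := by
        intro x
        obtain ⟨u, v, hu, hv, huv⟩ := hbad x
        have hmu : ((x, u) : Fin n × Fin n) ∈ O.filter (fun q => q.1 = x) := by
          simp [hO, Ne.symm hu]
        have hmv : ((x, v) : Fin n × Fin n) ∈ O.filter (fun q => q.1 = x) := by
          simp [hO, Ne.symm hv]
        have : 1 < (O.filter (fun q => q.1 = x)).card :=
          Finset.one_lt_card.mpr ⟨(x, u), hmu, (x, v), hmv, by simp [huv]⟩
        omega
      calc 2 * n = ∑ _x : Fin n, 2 := by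
            rw [Finset.sum_const, Finset.card_univ, Fintype.card_fin, smul_eq_mul, mul_comm]
        _ ≤ ∑ x : Fin n, (O.filter (fun q => q.1 = x)).card :=
            Finset.sum_le_sum (fun x _ => this x)
    -- upper bound
    set r₀ : Fin n := R 1 k with hr₀
    have hid : ∀ i j, X k i - X k j = X r₀ i - X r₀ j := by
      intro i j
      have := hR 1 k i j
      simpa using this
    set Φ : Fin n × Fin n → Fin n × Bool :=
      fun q => (R (Equiv.swap q.1 q.2) k, decide (q.1 < q.2)) with hΦ
    have hmaps : ∀ q ∈ O, Φ q ∈ (Finset.univ.erase r₀) ×ˢ (Finset.univ : Finset Bool) := by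
      intro q hq
      rw [hOmem] at hq
      refine Finset.mem_product.mpr ⟨Finset.mem_erase.mpr ⟨?_, Finset.mem_univ _⟩,
        Finset.mem_univ _⟩
      intro hcontra
      have h1 : ∀ i j, X k i - X k j =
          X (R (Equiv.swap q.1 q.2) k) (Equiv.swap q.1 q.2 i)
            - X (R (Equiv.swap q.1 q.2) k) (Equiv.swap q.1 q.2 j) :=
        fun i j => hR (Equiv.swap q.1 q.2) k i j
      have h2 : ∀ i j, X k i - X k j =
          X (R (Equiv.swap q.1 q.2) k) ((1 : Equiv.Perm (Fin n)) i)
            - X (R (Equiv.swap q.1 q.2) k) ((1 : Equiv.Perm (Fin n)) j) := by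
        intro i j
        have hc2 : R (Equiv.swap q.1 q.2) k = r₀ := hcontra
        rw [hc2]
        simpa using hid i j
      have hDC := diff_const hn0 (X k) (X (R (Equiv.swap q.1 q.2) k))
        (Equiv.swap q.1 q.2) 1 h1 h2 q.2
      rw [Equiv.symm_swap, Equiv.swap_apply_right] at hDC
      exact hq (by simpa [Equiv.Perm.one_symm] using hDC)
    have hinj : Set.InjOn Φ O := by
      intro q hq q' hq' hΦeq
      rw [Finset.mem_coe, hOmem] at hq hq'
      have hR1 : R (Equiv.swap q.1 q.2) k = R (Equiv.swap q'.1 q'.2) k :=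
        congrArg Prod.fst hΦeq
      have hbool : decide (q.1 < q.2) = decide (q'.1 < q'.2) :=
        congrArg Prod.snd hΦeq
      have h1 : ∀ i j, X k i - X k j =
          X (R (Equiv.swap q.1 q.2) k) (Equiv.swap q.1 q.2 i)
            - X (R (Equiv.swap q.1 q.2) k) (Equiv.swap q.1 q.2 j) :=
        fun i j => hR (Equiv.swap q.1 q.2) k i j
      have h2 : ∀ i j, X k i - X k j =
          X (R (Equiv.swap q.1 q.2) k) (Equiv.swap q'.1 q'.2 i)
            - X (R (Equiv.swap q.1 q.2) k) (Equiv.swap q'.1 q'.2 j) := by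
        intro i j
        rw [hR1]
        exact hR (Equiv.swap q'.1 q'.2) k i j
      have hDC := diff_const hn0 (X k) (X (R (Equiv.swap q.1 q.2) k))
        (Equiv.swap q.1 q.2) (Equiv.swap q'.1 q'.2) h1 h2
      rw [Equiv.symm_swap, Equiv.symm_swap] at hDC
      have heqfun : ∀ u, X k (Equiv.swap q.1 q.2 u) = X k (Equiv.swap q'.1 q'.2 u) := hDC
      rcases swap_pair_eq (X k) q.1 q.2 q'.1 q'.2 hq hq' heqfun with ⟨e1, e2⟩ | ⟨e1, e2⟩
      · exact Prod.ext e1 e2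
      · exfalso
        have hne' : q'.1 ≠ q'.2 := fun h => hq' (by rw [h])
        rw [e1, e2] at hbool
        rw [decide_eq_decide] at hbool
        rcases lt_or_gt_of_ne hne' with hlt | hlt
        · exact absurd (hbool.mpr hlt) (lt_asymm hlt)
        · exact absurd (hbool.mp hlt) (lt_asymm hlt)
    have hupper : O.card ≤ (n - 1) * 2 := by
      have := Finset.card_le_card_of_injOn Φ hmaps hinj
      rwa [Finset.card_product, Finset.card_erase_of_mem (Finset.mem_univ _),
        Finset.card_univ, Finset.card_univ, Fintype.card_fin, Fintype.card_bool] at this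
    omega
  -- Step A2: the row k is a spike
  obtain ⟨x₀, huniq⟩ := hnotbad
  have hexp : ∃ p, X k p ≠ X k x₀ := by
    by_cases h : X k l₀ ≠ X k x₀
    · exact ⟨l₀, h⟩
    · push_neg at h
      exact ⟨l₀', fun hc => hkne (by rw [h, hc])⟩
  obtain ⟨p, hp⟩ := hexp
  set c : ℝ := X k x₀ with hc
  have hoff : ∀ i, i ≠ p → X k i = c := by
    intro i hip
    by_contra hic
    exact hip (huniq i p hic hp)
  set β : ℝ := X k p - c with hβ
  have hβ0 : β ≠ 0 := sub_ne_zero.mpr hp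
  have hprof : ∀ i j, X k i - X k j =
      β * ((if i = p then (1:ℝ) else 0) - (if j = p then (1:ℝ) else 0)) := by
    intro i j
    by_cases hi : i = p <;> by_cases hj : j = p
    · rw [hi, hj]; simp
    · rw [hi, hoff j hj, if_pos rfl, if_neg hj, hβ]; ring
    · rw [hj, hoff i hi, if_neg hi, if_pos rfl, hβ]; ring
    · rw [hoff i hi, hoff j hj, if_neg hi, if_neg hj]; simp
  -- Step C: every row is a spike of height β
  set f : Fin n → Fin n := fun x => R (Equiv.swap p x) k with hf
  have hswapind : ∀ (x i : Fin n), (Equiv.swap p x i = p) = (i = x) := by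
    intro x i
    simp only [eq_iff_iff]
    rw [Equiv.swap_apply_eq_iff, Equiv.swap_apply_left]
  have hspike : ∀ x i j, X (f x) i - X (f x) j =
      β * ((if i = x then (1:ℝ) else 0) - (if j = x then (1:ℝ) else 0)) := by
    intro x i j
    have h := hR (Equiv.swap p x) k (Equiv.swap p x i) (Equiv.swap p x j)
    rw [Equiv.swap_apply_self, Equiv.swap_apply_self] at h
    rw [← h, hprof (Equiv.swap p x i) (Equiv.swap p x j)]
    simp only [hswapind]
  have hfinj : Function.Injective f := by
    intro x x' hxx
    by_contra hne
    have e1 : X (f x') x - X (f x') x' = β * (1 - 0) := by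
      rw [← hxx, hspike x x x', if_pos rfl, if_neg (Ne.symm hne)]
    have e2 : X (f x') x - X (f x') x' = β * (0 - 1) := by
      rw [hspike x' x x', if_neg hne, if_pos rfl]
    have hb : β = 0 := by linarith [e1.symm.trans e2]
    exact hβ0 hb
  have hfbij : Function.Bijective f := (Finite.injective_iff_bijective).mp hfinj
  set g : Equiv.Perm (Fin n) := Equiv.ofBijective f hfbij with hg
  have hgapp : ∀ x, g x = f x := fun x => rfl
  refine ⟨|β|, abs_pos.mpr hβ0, ?_⟩
  intro i j hij
  set t₀ : Fin n := ⟨0, by omega⟩ with ht₀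
  set t₁ : Fin n := ⟨1, by omega⟩ with ht₁
  have htne : t₀ ≠ t₁ := by
    intro h
    have := congrArg Fin.val h
    simp [ht₀, ht₁] at this
  have hv : ∀ r, X r i - X r j = if r = g i then β else if r = g j then -β else 0 := by
    intro r
    have hrow := hspike (g.symm r) i j
    have hfr : f (g.symm r) = r := g.apply_symm_apply r
    rw [hfr] at hrow
    rw [hrow]
    by_cases h0 : r = g i
    · have hx : i = g.symm r := by rw [h0, Equiv.symm_apply_apply]
      have hy : ¬ j = g.symm r := by rw [← hx]; exact Ne.symm hij
      rw [if_pos h0, if_pos hx, if_neg hy]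
      ring
    · have hx : ¬ i = g.symm r := fun h => h0 (by rw [h, Equiv.apply_symm_apply])
      by_cases h1 : r = g j
      · have hy : j = g.symm r := by rw [h1, Equiv.symm_apply_apply]
        rw [if_neg h0, if_pos h1, if_neg hx, if_pos hy]
        ring
      · have hy : ¬ j = g.symm r := fun h => h1 (by rw [h, Equiv.apply_symm_apply])
        rw [if_neg h0, if_neg h1, if_neg hx, if_neg hy]
        ring
  have hgne : g i ≠ g j := fun h => hij (g.injective h)
  have hw : ∀ t, (|β| • (Pi.single t₀ 1 - Pi.single t₁ 1 : Fin n → ℝ)) t =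
      if t = t₀ then |β| else if t = t₁ then -|β| else 0 := by
    intro t
    simp only [Pi.smul_apply, Pi.sub_apply, Pi.single_apply, smul_eq_mul]
    by_cases h0 : t = t₀
    · rw [if_pos h0, if_pos h0, if_neg (h0 ▸ htne : ¬ t = t₁)]
      ring
    · by_cases h1 : t = t₁
      · rw [if_neg h0, if_pos h1, if_neg h0, if_pos h1]
        ring
      · rw [if_neg h0, if_neg h1, if_neg h0, if_neg h1]
        ring
  rcases lt_or_gt_of_ne hβ0 with hβneg | hβpos
  · -- β < 0 : |β| = -β, positive spike is at g j
    have habs : |β| = -β := abs_of_neg hβneg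
    refine permOf_two_spike |β| (g j) (g i) t₀ t₁ (Ne.symm hgne) htne _ _ ?_ hw
    intro r
    rw [hv r]
    by_cases h0 : r = g j
    · rw [if_pos h0, if_pos h0]
      have : ¬ r = g i := fun h => hgne (by rw [← h, h0])
      rw [if_neg this, habs]
    · by_cases h1 : r = g i
      · rw [if_pos h1, if_neg h0, if_pos h1, habs]
        ring
      · rw [if_neg h1, if_neg h0, if_neg h0, if_neg h1]
  · -- β > 0
    have habs : |β| = β := abs_of_pos hβpos
    refine permOf_two_spike |β| (g i) (g j) t₀ t₁ hgne htne _ _ ?_ hw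
    intro r
    rw [hv r, habs]
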